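/- Let G be a connected simple graph with root r, and let H be a connected graph obtained from G by deleting an edge of DFS(G). Then every κ-inversion of DFS(H) regarded as a spanning tree of G is also a κ-inversion of DFS(H) regarded as a spanning tree of H, and conversely; in particular κ(G, DFS(H)) = κ(H, DFS(H)). -/

import Mathlib

open Finset

namespace PFG

variable {n : ℕ}

/-- `deg_{Sᶜ}(i)`: the number of edges `{i,j}` of `G` with `j ∉ S`. -/
noncomputable def sDeg (G : SimpleGraph (Fin (n+1))) (S : Finset (Fin (n+1))) (i : Fin (n+1)) : ℕ :=
  Set.ncard {j : Fin (n+1) | G.Adj i j ∧ j ∉ S}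

/-- `P` is a parking function for `G` with respect to the root `r`:
for every nonempty `S ⊆ V \ {r}` there is `i ∈ S` with `P i < deg_{Sᶜ}(i)`. -/
def IsParkingFunction (G : SimpleGraph (Fin (n+1))) (r : Fin (n+1))
    (P : Fin (n+1) → ℕ) : Prop :=
  ∀ S : Finset (Fin (n+1)), S.Nonempty → r ∉ S → ∃ i ∈ S, P i < sDeg G S i

/-- The degree of a parking function: the sum of its values over non-root vertices. -/
def degPF (r : Fin (n+1)) (P : Fin (n+1) → ℕ) : ℕ := ∑ v ∈ univ.erase r, P v

/-- A spanning tree of `G` rooted at `r`, encoded by its parent function: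
each non-root vertex is adjacent (in `G`) to its parent, and iterating
the parent map from any vertex reaches the root. -/
structure RootedSpanningTree (G : SimpleGraph (Fin (n+1))) (r : Fin (n+1)) where
  parent : Fin (n+1) → Fin (n+1)
  parent_root : parent r = r
  adj_parent : ∀ v, v ≠ r → G.Adj (parent v) v
  reaches_root : ∀ v, ∃ k, parent^[k] v = r

/-- `i` is a (proper) ancestor of `j` in the rooted tree with parent map `par`. -/
def IsAncestor (par : Fin (n+1) → Fin (n+1)) (i j : Fin (n+1)) : Prop :=
  ∃ k, 0 < k ∧ par^[k] j = i

/-- An inversion: `i` is an ancestor of `j` and `i > j`. -/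
def IsInversion (par : Fin (n+1) → Fin (n+1)) (i j : Fin (n+1)) : Prop :=
  IsAncestor par i j ∧ j < i

/-- A κ-inversion: an inversion `(i,j)` such that moreover `i` is not the
root and the parent of `i` is adjacent to `j` in `G`. -/
def IsKappaInversion (G : SimpleGraph (Fin (n+1))) (r : Fin (n+1))
    (par : Fin (n+1) → Fin (n+1)) (i j : Fin (n+1)) : Prop :=
  IsAncestor par i j ∧ j < i ∧ i ≠ r ∧ G.Adj (par i) j

/-- the κ-number: the number of κ-inversions. -/
noncomputable def kappaNum (G : SimpleGraph (Fin (n+1))) (r : Fin (n+1))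
    (par : Fin (n+1) → Fin (n+1)) : ℕ :=
  Set.ncard {p : Fin (n+1) × Fin (n+1) | IsKappaInversion G r par p.1 p.2}

/-- the number of inversions. -/
noncomputable def invNum (par : Fin (n+1) → Fin (n+1)) : ℕ :=
  Set.ncard {p : Fin (n+1) × Fin (n+1) | IsInversion par p.1 p.2}

open Classical in
/-- The neighbors of `i` in `G`, listed in decreasing order. -/
noncomputable def nbrs (G : SimpleGraph (Fin (n+1))) (i : Fin (n+1)) : List (Fin (n+1)) :=
  ((univ.filter (fun j => G.Adj i j)).sort (· ≤ ·)).reverse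

/-- One step of depth-first search from vertex `i`: scan the neighbors of `i`
in decreasing order; each unvisited neighbor `j` is visited, gets parent `i`,
and the search recurses from `j`.  The state is the pair
(visited vertices, parent map). -/
noncomputable def dfsStep (G : SimpleGraph (Fin (n+1))) :
    ℕ → Fin (n+1) → Finset (Fin (n+1)) × (Fin (n+1) → Fin (n+1)) →
      Finset (Fin (n+1)) × (Fin (n+1) → Fin (n+1))
  | 0, _, st => st
  | (fuel+1), i, st =>
      (nbrs G i).foldl
        (fun st j =>
          if j ∈ st.1 then st
          else dfsStep G fuel j (insert j st.1, Function.update st.2 j i)) st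

/-- The parent map of the depth-first search tree of `G` rooted at `r`,
visiting neighbors in decreasing numerical order. -/
noncomputable def dfsParent (G : SimpleGraph (Fin (n+1))) (r : Fin (n+1)) :
    Fin (n+1) → Fin (n+1) :=
  (dfsStep G (n+1) r ({r}, fun _ => r)).2

/-- The set of edges of the rooted tree given by parent map `par`. -/
def treeEdges (r : Fin (n+1)) (par : Fin (n+1) → Fin (n+1)) : Set (Sym2 (Fin (n+1))) :=
  {e | ∃ v, v ≠ r ∧ e = s(par v, v)}

end PFG

namespace PFG
variable {n : ℕ}

abbrev St (n : ℕ) := Finset (Fin (n+1)) × (Fin (n+1) → Fin (n+1))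

noncomputable def stp (G : SimpleGraph (Fin (n+1))) (fuel : ℕ) (i : Fin (n+1)) :
    St n → Fin (n+1) → St n :=
  fun st j => if j ∈ st.1 then st else dfsStep G fuel j (insert j st.1, Function.update st.2 j i)

theorem dfsStep_succ (G : SimpleGraph (Fin (n+1))) (fuel : ℕ) (i : Fin (n+1)) (st : St n) :
    dfsStep G (fuel+1) i st = (nbrs G i).foldl (stp G fuel i) st := rfl

theorem dfsStep_zero (G : SimpleGraph (Fin (n+1))) (i : Fin (n+1)) (st : St n) :
    dfsStep G 0 i st = st := rfl

theorem stp_mem (G : SimpleGraph (Fin (n+1))) {fuel : ℕ} {i : Fin (n+1)} {st : St n}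
    {j : Fin (n+1)} (hj : j ∈ st.1) : stp G fuel i st j = st := by
  unfold stp; simp [hj]

theorem stp_not (G : SimpleGraph (Fin (n+1))) {fuel : ℕ} {i : Fin (n+1)} {st : St n}
    {j : Fin (n+1)} (hj : j ∉ st.1) :
    stp G fuel i st j = dfsStep G fuel j (insert j st.1, Function.update st.2 j i) := by
  unfold stp; simp [hj]

theorem mem_nbrs (G : SimpleGraph (Fin (n+1))) (i w : Fin (n+1)) :
    w ∈ nbrs G i ↔ G.Adj i w := by
  simp [nbrs]

theorem nbrs_nodup (G : SimpleGraph (Fin (n+1))) (i : Fin (n+1)) : (nbrs G i).Nodup := by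
  simpa [nbrs] using (Finset.sort_nodup _ _)

theorem chain_mem {f : Fin (n+1) → Fin (n+1)} {S : Finset (Fin (n+1))}
    (hf : ∀ u ∈ S, f u ∈ S) {u : Fin (n+1)} (hu : u ∈ S) : ∀ k, f^[k] u ∈ S := by
  intro k; induction k with
  | zero => simpa
  | succ k ih => rw [Function.iterate_succ_apply']; exact hf _ ih

theorem chain_congr {f g : Fin (n+1) → Fin (n+1)} {S : Finset (Fin (n+1))}
    (hfg : ∀ u ∈ S, g u = f u) (hf : ∀ u ∈ S, f u ∈ S) {u : Fin (n+1)} (hu : u ∈ S) :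
    ∀ k, g^[k] u = f^[k] u := by
  intro k; induction k with
  | zero => rfl
  | succ k ih =>
      rw [Function.iterate_succ_apply', Function.iterate_succ_apply', ih]
      exact hfg _ (chain_mem hf hu k)

theorem iterate_update_ne {f : Fin (n+1) → Fin (n+1)} {j a : Fin (n+1)} :
    ∀ (k : ℕ) (u : Fin (n+1)), (∀ m, m < k → f^[m] u ≠ j) →
      (Function.update f j a)^[k] u = f^[k] u := by
  intro k; induction k with
  | zero => intro u _; rfl
  | succ k ih =>
      intro u hu
      rw [Function.iterate_succ_apply, Function.iterate_succ_apply]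
      have h0 : u ≠ j := by simpa using hu 0 (Nat.succ_pos k)
      rw [Function.update_of_ne h0]
      exact ih (f u) (fun m hm => by
        have := hu (m+1) (Nat.succ_lt_succ hm)
        simpa [Function.iterate_succ_apply] using this)

theorem cycle_eq_root {f : Fin (n+1) → Fin (n+1)} {x r : Fin (n+1)}
    (hr : f r = r) {k c : ℕ} (hc : 0 < c) (hcyc : f^[c] x = x) (hk : f^[k] x = r) : x = r := by
  have hfix : ∀ m, f^[c*m] x = x := by
    intro m
    rw [Function.iterate_mul]
    exact Function.iterate_fixed hcyc m
  have h2 : f^[c*(k+1)] x = r := by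
    have hge : k ≤ c * (k+1) := by
      calc k ≤ k + 1 := Nat.le_succ k
      _ = 1 * (k+1) := by ring
      _ ≤ c * (k+1) := Nat.mul_le_mul_right _ hc
    have he : c*(k+1) = (c*(k+1) - k) + k := by omega
    rw [he, Function.iterate_add_apply, hk]
    exact Function.iterate_fixed hr _
  rw [hfix (k+1)] at h2
  exact h2

section Generic
variable (X : SimpleGraph (Fin (n+1)))

theorem mono_call : ∀ (fuel : ℕ) (i : Fin (n+1)) (st : St n), st.1 ⊆ (dfsStep X fuel i st).1 := by
  intro fuel
  induction fuel with
  | zero => intro i st; rw [dfsStep_zero]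
  | succ f ih =>
      intro i st
      rw [dfsStep_succ]
      have key : ∀ (l : List (Fin (n+1))) (st : St n), st.1 ⊆ (l.foldl (stp X f i) st).1 := by
        intro l
        induction l with
        | nil => intro st; rw [List.foldl_nil]
        | cons j l ihl =>
            intro st
            rw [List.foldl_cons]
            refine Finset.Subset.trans ?_ (ihl _)
            by_cases hj : j ∈ st.1
            · rw [stp_mem X hj]
            · rw [stp_not X hj]
              exact Finset.Subset.trans (Finset.subset_insert j st.1)
                (ih j (insert j st.1, Function.update st.2 j i))
      exact key _ st

theorem mono_fold (fuel : ℕ) (i : Fin (n+1)) :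
    ∀ (l : List (Fin (n+1))) (st : St n), st.1 ⊆ (l.foldl (stp X fuel i) st).1 := by
  intro l
  induction l with
  | nil => intro st; rw [List.foldl_nil]
  | cons j l ihl =>
      intro st
      rw [List.foldl_cons]
      refine Finset.Subset.trans ?_ (ihl _)
      by_cases hj : j ∈ st.1
      · rw [stp_mem X hj]
      · rw [stp_not X hj]
        exact Finset.Subset.trans (Finset.subset_insert j st.1)
          (mono_call X fuel j (insert j st.1, Function.update st.2 j i))

theorem mem_fold (fuel : ℕ) (i : Fin (n+1)) :
    ∀ (l : List (Fin (n+1))) (st : St n) (w : Fin (n+1)), w ∈ l →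
      w ∈ (l.foldl (stp X fuel i) st).1 := by
  intro l
  induction l with
  | nil => intro st w hw; simp at hw
  | cons j l ihl =>
      intro st w hw
      rw [List.foldl_cons]
      rcases List.mem_cons.mp hw with rfl | hw
      · apply mono_fold
        by_cases hj : w ∈ st.1
        · rw [stp_mem X hj]; exact hj
        · rw [stp_not X hj]
          exact mono_call X fuel w _ (Finset.mem_insert_self _ _)
      · exact ihl _ _ hw

theorem frozen_fold (fuel : ℕ) (i : Fin (n+1))
    (hcall : ∀ (j : Fin (n+1)) (st : St n) (u : Fin (n+1)),
      (u ∈ st.1 ∨ u ∉ (dfsStep X fuel j st).1) → (dfsStep X fuel j st).2 u = st.2 u) :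
    ∀ (l : List (Fin (n+1))) (st : St n) (u : Fin (n+1)),
      (u ∈ st.1 ∨ u ∉ (l.foldl (stp X fuel i) st).1) →
      (l.foldl (stp X fuel i) st).2 u = st.2 u := by
  intro l
  induction l with
  | nil => intro st u _; rw [List.foldl_nil]
  | cons j l ihl =>
      intro st u hu
      rw [List.foldl_cons] at hu ⊢
      by_cases hj : j ∈ st.1
      · rw [stp_mem X hj] at hu ⊢; exact ihl _ _ hu
      · rw [stp_not X hj] at hu ⊢
        set st' : St n := (insert j st.1, Function.update st.2 j i) with hst'def
        set sub := dfsStep X fuel j st' with hsubdef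
        have hjsub : j ∈ sub.1 := mono_call X fuel j st' (Finset.mem_insert_self _ _)
        have hunej : u ≠ j := by
          rcases hu with hu | hu
          · exact fun h => hj (h ▸ hu)
          · intro h; apply hu; rw [h]; exact mono_fold X fuel i l sub hjsub
        have hsub2 : st'.2 u = st.2 u := Function.update_of_ne hunej _ _
        have h1 : (l.foldl (stp X fuel i) sub).2 u = sub.2 u := by
          apply ihl
          rcases hu with hu | hu
          · left; exact mono_call X fuel j st' (Finset.mem_insert_of_mem hu)
          · right; exact hu
        have h2 : sub.2 u = st'.2 u := by
          apply hcall
          rcases hu with hu | hu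
          · left; exact Finset.mem_insert_of_mem hu
          · right; intro hmem
            exact hu (mono_fold X fuel i l sub hmem)
        rw [h1, h2, hsub2]

theorem frozen_call : ∀ (fuel : ℕ) (i : Fin (n+1)) (st : St n) (u : Fin (n+1)),
    (u ∈ st.1 ∨ u ∉ (dfsStep X fuel i st).1) → (dfsStep X fuel i st).2 u = st.2 u := by
  intro fuel
  induction fuel with
  | zero => intro i st u _; rw [dfsStep_zero]
  | succ f ih =>
      intro i st u hu
      rw [dfsStep_succ] at hu ⊢
      exact frozen_fold X f i ih _ st u hu

theorem frozen_fold' (fuel : ℕ) (i : Fin (n+1)) :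
    ∀ (l : List (Fin (n+1))) (st : St n) (u : Fin (n+1)),
      (u ∈ st.1 ∨ u ∉ (l.foldl (stp X fuel i) st).1) →
      (l.foldl (stp X fuel i) st).2 u = st.2 u :=
  frozen_fold X fuel i (frozen_call X fuel)

theorem scope_fold (fuel : ℕ) (i : Fin (n+1))
    (hcall : ∀ (j : Fin (n+1)) (st : St n) (u : Fin (n+1)), j ∈ st.1 →
      u ∈ (dfsStep X fuel j st).1 → u ∉ st.1 →
      ((dfsStep X fuel j st).2 u = j ∨
        ((dfsStep X fuel j st).2 u ∈ (dfsStep X fuel j st).1 ∧ (dfsStep X fuel j st).2 u ∉ st.1))) :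
    ∀ (l : List (Fin (n+1))) (st : St n) (u : Fin (n+1)), i ∈ st.1 →
      u ∈ (l.foldl (stp X fuel i) st).1 → u ∉ st.1 →
      (((l.foldl (stp X fuel i) st).2 u = i ∧ u ∈ l) ∨
        ((l.foldl (stp X fuel i) st).2 u ∈ (l.foldl (stp X fuel i) st).1 ∧
          (l.foldl (stp X fuel i) st).2 u ∉ st.1)) := by
  intro l
  induction l with
  | nil => intro st u _ hu hnu; rw [List.foldl_nil] at hu; exact absurd hu hnu
  | cons j l ihl =>
      intro st u hi hu hnu
      rw [List.foldl_cons] at hu ⊢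
      by_cases hj : j ∈ st.1
      · rw [stp_mem X hj] at hu ⊢
        rcases ihl st u hi hu hnu with ⟨h1, h2⟩ | h
        · exact Or.inl ⟨h1, List.mem_cons_of_mem _ h2⟩
        · exact Or.inr h
      · rw [stp_not X hj] at hu ⊢
        set st' : St n := (insert j st.1, Function.update st.2 j i) with hst'def
        set sub := dfsStep X fuel j st' with hsubdef
        set res := l.foldl (stp X fuel i) sub with hresdef
        have hsubres : sub.1 ⊆ res.1 := mono_fold X fuel i l sub
        have hstsub : st'.1 ⊆ sub.1 := mono_call X fuel j st'
        by_cases huj : u = j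
        · have hjmem : j ∈ sub.1 := hstsub (Finset.mem_insert_self _ _)
          have h1 : res.2 j = sub.2 j := frozen_fold' X fuel i l sub j (Or.inl hjmem)
          have h2 : sub.2 j = st'.2 j := frozen_call X fuel j st' j (Or.inl (Finset.mem_insert_self _ _))
          have h3 : st'.2 j = i := Function.update_self _ _ _
          refine Or.inl ⟨?_, ?_⟩
          · rw [huj, h1, h2, h3]
          · rw [huj]; exact List.mem_cons_self
        · by_cases husub : u ∈ sub.1
          · have hunst' : u ∉ st'.1 := by
              intro hmem
              rcases Finset.mem_insert.mp hmem with h | h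
              · exact huj h
              · exact hnu h
            have hfr : res.2 u = sub.2 u := frozen_fold' X fuel i l sub u (Or.inl husub)
            rcases hcall j st' u (Finset.mem_insert_self _ _) husub hunst' with h | ⟨h1, h2⟩
            · refine Or.inr ⟨?_, ?_⟩
              · rw [hfr, h]; exact hsubres (hstsub (Finset.mem_insert_self _ _))
              · rw [hfr, h]; exact hj
            · refine Or.inr ⟨?_, ?_⟩
              · rw [hfr]; exact hsubres h1
              · rw [hfr]; intro hc; exact h2 (Finset.mem_insert_of_mem hc)
          · rcases ihl sub u (hstsub (Finset.mem_insert_of_mem hi)) hu husub with ⟨h1, h2⟩ | ⟨h1, h2⟩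
            · exact Or.inl ⟨h1, List.mem_cons_of_mem _ h2⟩
            · exact Or.inr ⟨h1, fun hc => h2 (hstsub (Finset.mem_insert_of_mem hc))⟩

theorem scope_call : ∀ (fuel : ℕ) (i : Fin (n+1)) (st : St n) (u : Fin (n+1)), i ∈ st.1 →
    u ∈ (dfsStep X fuel i st).1 → u ∉ st.1 →
    ((dfsStep X fuel i st).2 u = i ∨
      ((dfsStep X fuel i st).2 u ∈ (dfsStep X fuel i st).1 ∧ (dfsStep X fuel i st).2 u ∉ st.1)) := by
  intro fuel
  induction fuel with
  | zero => intro i st u _ hu hnu; rw [dfsStep_zero] at hu; exact absurd hu hnu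
  | succ f ih =>
      intro i st u hi hu hnu
      rw [dfsStep_succ] at hu ⊢
      rcases scope_fold X f i ih (nbrs X i) st u hi hu hnu with ⟨h1, _⟩ | h
      · exact Or.inl h1
      · exact Or.inr h

theorem scope_fold' (fuel : ℕ) (i : Fin (n+1)) :
    ∀ (l : List (Fin (n+1))) (st : St n) (u : Fin (n+1)), i ∈ st.1 →
      u ∈ (l.foldl (stp X fuel i) st).1 → u ∉ st.1 →
      (((l.foldl (stp X fuel i) st).2 u = i ∧ u ∈ l) ∨
        ((l.foldl (stp X fuel i) st).2 u ∈ (l.foldl (stp X fuel i) st).1 ∧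
          (l.foldl (stp X fuel i) st).2 u ∉ st.1)) :=
  scope_fold X fuel i (fun j st u hj => scope_call X fuel j st u hj)

end Generic

def Good (r : Fin (n+1)) (st : St n) : Prop :=
  r ∈ st.1 ∧ st.2 r = r ∧ (∀ u ∈ st.1, st.2 u ∈ st.1) ∧ (∀ u, u ∉ st.1 → st.2 u = r) ∧
  (∀ u ∈ st.1, st.2 u = u → u = r) ∧ (∀ u ∈ st.1, ∃ k, st.2^[k] u = r)

theorem good_insert {r : Fin (n+1)} {st : St n} (hG : Good r st) {i j : Fin (n+1)}
    (hi : i ∈ st.1) (hj : j ∉ st.1) :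
    Good r (insert j st.1, Function.update st.2 j i) := by
  obtain ⟨g1, g2, g3, g4, g5, g6⟩ := hG
  have hrj : r ≠ j := fun h => hj (h ▸ g1)
  have hij : i ≠ j := fun h => hj (h ▸ hi)
  refine ⟨Finset.mem_insert_of_mem g1, ?_, ?_, ?_, ?_, ?_⟩
  · show Function.update st.2 j i r = r
    rw [Function.update_of_ne hrj]; exact g2
  · intro u hu
    rcases Finset.mem_insert.mp hu with rfl | hu
    · show Function.update st.2 u i u ∈ _
      rw [Function.update_self]; exact Finset.mem_insert_of_mem hi
    · have huj : u ≠ j := fun h => hj (h ▸ hu)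
      show Function.update st.2 j i u ∈ _
      rw [Function.update_of_ne huj]
      exact Finset.mem_insert_of_mem (g3 u hu)
  · intro u hu
    have h1 : u ∉ st.1 := fun h => hu (Finset.mem_insert_of_mem h)
    have h2 : u ≠ j := fun h => hu (h ▸ Finset.mem_insert_self j st.1)
    show Function.update st.2 j i u = r
    rw [Function.update_of_ne h2]; exact g4 u h1
  · intro u hu heq
    rcases Finset.mem_insert.mp hu with rfl | hu
    · have heq' : Function.update st.2 u i u = u := heq
      rw [Function.update_self] at heq'
      exact absurd heq' hij
    · have huj : u ≠ j := fun h => hj (h ▸ hu)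
      have heq' : Function.update st.2 j i u = u := heq
      rw [Function.update_of_ne huj] at heq'
      exact g5 u hu heq'
  · intro u hu
    rcases Finset.mem_insert.mp hu with rfl | hu
    · obtain ⟨k, hk⟩ := g6 i hi
      refine ⟨k + 1, ?_⟩
      show (Function.update st.2 u i)^[k+1] u = r
      rw [Function.iterate_succ_apply, Function.update_self]
      rw [iterate_update_ne k i (fun m _ => fun h => hj (by rw [← h]; exact chain_mem g3 hi m))]
      exact hk
    · obtain ⟨k, hk⟩ := g6 u hu
      refine ⟨k, ?_⟩
      show (Function.update st.2 j i)^[k] u = r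
      rw [iterate_update_ne k u (fun m _ => fun h => hj (by rw [← h]; exact chain_mem g3 hu m))]
      exact hk

section Generic2
variable (X : SimpleGraph (Fin (n+1)))

theorem good_fold {r : Fin (n+1)} (fuel : ℕ) (i : Fin (n+1))
    (hcall : ∀ (j : Fin (n+1)) (st : St n), j ∈ st.1 → Good r st → Good r (dfsStep X fuel j st)) :
    ∀ (l : List (Fin (n+1))) (st : St n), i ∈ st.1 → Good r st →
      Good r (l.foldl (stp X fuel i) st) := by
  intro l
  induction l with
  | nil => intro st _ h; rw [List.foldl_nil]; exact h
  | cons j l ihl =>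
      intro st hi hG
      rw [List.foldl_cons]
      by_cases hj : j ∈ st.1
      · rw [stp_mem X hj]; exact ihl st hi hG
      · rw [stp_not X hj]
        have hG' := good_insert hG hi hj
        have hGsub := hcall j _ (Finset.mem_insert_self _ _) hG'
        exact ihl _ (mono_call X fuel j _ (Finset.mem_insert_of_mem hi)) hGsub

theorem good_call {r : Fin (n+1)} : ∀ (fuel : ℕ) (i : Fin (n+1)) (st : St n),
    i ∈ st.1 → Good r st → Good r (dfsStep X fuel i st) := by
  intro fuel
  induction fuel with
  | zero => intro i st _ h; rw [dfsStep_zero]; exact h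
  | succ f ih =>
      intro i st hi hG
      rw [dfsStep_succ]
      exact good_fold X f i ih _ st hi hG

theorem good_fold' {r : Fin (n+1)} (fuel : ℕ) (i : Fin (n+1)) :
    ∀ (l : List (Fin (n+1))) (st : St n), i ∈ st.1 → Good r st →
      Good r (l.foldl (stp X fuel i) st) :=
  good_fold X fuel i (fun j st hj => good_call X fuel j st hj)

theorem closed_call : ∀ (fuel : ℕ) (i : Fin (n+1)) (st : St n), i ∈ st.1 →
    n + 2 ≤ fuel + st.1.card →
    ∀ u w, (u = i ∨ (u ∈ (dfsStep X fuel i st).1 ∧ u ∉ st.1)) → X.Adj u w →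
      w ∈ (dfsStep X fuel i st).1 := by
  intro fuel
  induction fuel with
  | zero =>
      intro i st _ hcard u w _ _
      exfalso
      have h1 : st.1.card ≤ n + 1 := by
        have := Finset.card_le_univ st.1
        simpa using this
      omega
  | succ f ih =>
      intro i st hi hcard u w hu hadj
      rw [dfsStep_succ]
      have key : ∀ (l : List (Fin (n+1))) (st : St n), n + 1 ≤ f + st.1.card →
          ∀ u w, (u ∈ (l.foldl (stp X f i) st).1 ∧ u ∉ st.1) → X.Adj u w →
          w ∈ (l.foldl (stp X f i) st).1 := by
        intro l
        induction l with
        | nil =>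
            intro st _ u w hu _
            rw [List.foldl_nil] at hu
            exact absurd hu.1 hu.2
        | cons j l ihl =>
            intro st hcard u w hu hadj
            obtain ⟨hu1, hu2⟩ := hu
            rw [List.foldl_cons] at hu1 ⊢
            by_cases hj : j ∈ st.1
            · rw [stp_mem X hj] at hu1 ⊢
              exact ihl st hcard u w ⟨hu1, hu2⟩ hadj
            · rw [stp_not X hj] at hu1 ⊢
              set st' : St n := (insert j st.1, Function.update st.2 j i) with hst'def
              set sub := dfsStep X f j st' with hsubdef
              have hcardins : st'.1.card = st.1.card + 1 := Finset.card_insert_of_notMem hj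
              have hcard' : n + 2 ≤ f + st'.1.card := by omega
              have hsubcard : st'.1.card ≤ sub.1.card :=
                Finset.card_le_card (mono_call X f j st')
              by_cases husub : u ∈ sub.1
              · have hw : w ∈ sub.1 := by
                  apply ih j st' (Finset.mem_insert_self _ _) hcard' u w _ hadj
                  by_cases huj : u = j
                  · exact Or.inl huj
                  · refine Or.inr ⟨husub, ?_⟩
                    intro hmem
                    rcases Finset.mem_insert.mp hmem with h | h
                    · exact huj h
                    · exact hu2 h
                exact mono_fold X f i l sub hw
              · apply ihl sub _ u w ⟨hu1, husub⟩ hadj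
                omega
      rcases hu with rfl | ⟨hu1, hu2⟩
      · have hw : w ∈ nbrs X u := (mem_nbrs X u w).mpr hadj
        exact mem_fold X f u _ st w hw
      · rw [dfsStep_succ] at hu1
        exact key _ st (by omega) u w ⟨hu1, hu2⟩ hadj

theorem visits_all (hconn : X.Connected) (r u : Fin (n+1)) :
    u ∈ (dfsStep X (n+1) r ({r}, fun _ => r)).1 := by
  set st0 : St n := ({r}, fun _ => r) with hst0
  set res := dfsStep X (n+1) r st0 with hres
  have hr0 : r ∈ st0.1 := by simp [hst0]
  have hr : r ∈ res.1 := mono_call X (n+1) r st0 hr0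
  have hcard0 : st0.1.card = 1 := by simp [hst0]
  have hclosure : ∀ a b, a ∈ res.1 → X.Adj a b → b ∈ res.1 := by
    intro a b ha hadj
    apply closed_call X (n+1) r st0 hr0 (by omega) a b _ hadj
    by_cases har : a = r
    · exact Or.inl har
    · refine Or.inr ⟨ha, ?_⟩
      simp [hst0, har]
  have hwalk : ∀ (a b : Fin (n+1)) (_ : X.Walk a b), a ∈ res.1 → b ∈ res.1 := by
    intro a b w
    induction w with
    | nil => exact id
    | cons h q ih => intro ha; exact ih (hclosure _ _ ha h)
  obtain ⟨w⟩ := hconn.preconnected r u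
  exact hwalk r u w hr

end Generic2
end PFG


namespace PFG
variable {n : ℕ}

theorem desc_ext {l1 l2 : List (Fin (n+1))}
    (h1 : l1.Pairwise (fun a b => b < a)) (h2 : l2.Pairwise (fun a b => b < a))
    (hm : ∀ x, x ∈ l1 ↔ x ∈ l2) : l1 = l2 := by
  haveI : IsAntisymm (Fin (n+1)) (fun a b => b < a) :=
    ⟨fun a b hab hba => absurd hba (lt_asymm hab)⟩
  have hn1 : l1.Nodup := h1.imp (fun h => (ne_of_gt h))
  have hn2 : l2.Nodup := h2.imp (fun h => (ne_of_gt h))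
  have hperm : l1.Perm l2 := by
    apply List.perm_of_nodup_nodup_toFinset_eq hn1 hn2
    ext x
    simp only [List.mem_toFinset]
    exact hm x
  exact List.Perm.eq_of_pairwise (fun _ _ _ _ hab hba => absurd hba (lt_asymm hab)) h1 h2 hperm

theorem nbrs_sorted (G : SimpleGraph (Fin (n+1))) (i : Fin (n+1)) :
    (nbrs G i).Pairwise (fun a b => b < a) := by
  unfold nbrs
  rw [List.pairwise_reverse]
  exact (Finset.sortedLT_sort _).pairwise

section Del
variable {G H : SimpleGraph (Fin (n+1))} {p v : Fin (n+1)}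

theorem H_adj (hH : H = G.deleteEdges {s(p,v)}) (a b : Fin (n+1)) :
    H.Adj a b ↔ G.Adj a b ∧ ¬(a = p ∧ b = v) ∧ ¬(a = v ∧ b = p) := by
  rw [hH, SimpleGraph.deleteEdges_adj]
  constructor
  · rintro ⟨h1, h2⟩
    refine ⟨h1, ?_, ?_⟩
    · rintro ⟨rfl, rfl⟩; exact h2 (Set.mem_singleton _)
    · rintro ⟨rfl, rfl⟩
      apply h2
      rw [Set.mem_singleton_iff, Sym2.eq_iff]
      exact Or.inr ⟨rfl, rfl⟩
  · rintro ⟨h1, h2, h3⟩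
    refine ⟨h1, ?_⟩
    intro hmem
    rw [Set.mem_singleton_iff, Sym2.eq_iff] at hmem
    rcases hmem with ⟨ha, hb⟩ | ⟨ha, hb⟩
    · exact h2 ⟨ha, hb⟩
    · exact h3 ⟨ha, hb⟩

theorem nbrs_eq (hH : H = G.deleteEdges {s(p,v)}) {i : Fin (n+1)}
    (hip : i ≠ p) (hiv : i ≠ v) : nbrs H i = nbrs G i := by
  apply desc_ext (nbrs_sorted H i) (nbrs_sorted G i)
  intro x
  rw [mem_nbrs, mem_nbrs, H_adj hH]
  constructor
  · exact fun h => h.1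
  · intro h
    refine ⟨h, ?_, ?_⟩
    · rintro ⟨h1, _⟩; exact hip h1
    · rintro ⟨h1, _⟩; exact hiv h1

theorem nbrs_split (hH : H = G.deleteEdges {s(p,v)}) (hadjpv : G.Adj p v) :
    ∃ L1 L2 : List (Fin (n+1)), nbrs G p = L1 ++ v :: L2 ∧ nbrs H p = L1 ++ L2 ∧
      (∀ x ∈ L1, v < x) ∧ (∀ x ∈ L2, x < v) := by
  have hpv : p ≠ v := hadjpv.ne
  have hvmem : v ∈ nbrs G p := (mem_nbrs G p v).mpr hadjpv
  obtain ⟨L1, L2, hsplit⟩ := List.append_of_mem hvmem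
  have hpair := nbrs_sorted G p
  rw [hsplit] at hpair
  obtain ⟨hp1, hp2, hp3⟩ := List.pairwise_append.mp hpair
  have hL1 : ∀ x ∈ L1, v < x := fun x hx => hp3 x hx v (List.mem_cons_self)
  obtain ⟨hL2, hp2'⟩ := List.pairwise_cons.mp hp2
  refine ⟨L1, L2, hsplit, ?_, hL1, hL2⟩
  apply desc_ext (nbrs_sorted H p)
  · rw [List.pairwise_append]
    exact ⟨hp1, hp2', fun a ha b hb => lt_trans (hL2 b hb) (hL1 a ha)⟩
  · intro x
    rw [mem_nbrs, H_adj hH]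
    constructor
    · rintro ⟨h1, h2, _⟩
      have hx : x ∈ nbrs G p := (mem_nbrs G p x).mpr h1
      rw [hsplit] at hx
      rcases List.mem_append.mp hx with hx | hx
      · exact List.mem_append.mpr (Or.inl hx)
      · rcases List.mem_cons.mp hx with rfl | hx
        · exact absurd ⟨rfl, rfl⟩ h2
        · exact List.mem_append.mpr (Or.inr hx)
    · intro hx
      have hxv : x ≠ v := by
        rcases List.mem_append.mp hx with hx | hx
        · exact (ne_of_gt (hL1 x hx))
        · exact (ne_of_lt (hL2 x hx))
      have hxG : x ∈ nbrs G p := by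
        rw [hsplit]
        rcases List.mem_append.mp hx with hx | hx
        · exact List.mem_append.mpr (Or.inl hx)
        · exact List.mem_append.mpr (Or.inr (List.mem_cons_of_mem _ hx))
      refine ⟨(mem_nbrs G p x).mp hxG, ?_, ?_⟩
      · rintro ⟨_, h2⟩; exact hxv h2
      · rintro ⟨h1, _⟩; exact hpv h1

theorem chain_reach (X : SimpleGraph (Fin (n+1))) (fuel : ℕ) (i : Fin (n+1))
    (l : List (Fin (n+1))) (B : St n) (hiB : i ∈ B.1) {u0 : Fin (n+1)}
    (hu0 : u0 ∈ (l.foldl (stp X fuel i) B).1) (hu0' : u0 ∉ B.1) :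
    ∀ m, ((l.foldl (stp X fuel i) B).2^[m] u0 ∈ (l.foldl (stp X fuel i) B).1 ∧
            (l.foldl (stp X fuel i) B).2^[m] u0 ∉ B.1) ∨
         ∃ t, (l.foldl (stp X fuel i) B).2^[t] i = (l.foldl (stp X fuel i) B).2^[m] u0 := by
  set res := l.foldl (stp X fuel i) B with hres
  intro m
  induction m with
  | zero => exact Or.inl ⟨hu0, hu0'⟩
  | succ m ih =>
      rw [Function.iterate_succ_apply']
      rcases ih with ⟨h1, h2⟩ | ⟨t, ht⟩
      · rcases scope_fold' X fuel i l B _ hiB h1 h2 with ⟨heq, _⟩ | ⟨h3, h4⟩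
        · exact Or.inr ⟨0, heq.symm⟩
        · exact Or.inl ⟨h3, h4⟩
      · refine Or.inr ⟨t+1, ?_⟩
        rw [Function.iterate_succ_apply', ht]

theorem pre_call (hH : H = G.deleteEdges {s(p,v)}) (hadjpv : G.Adj p v) :
    ∀ (fuel : ℕ) (i : Fin (n+1)) (st : St n), i ∈ st.1 →
      v ∉ (dfsStep G fuel i st).1 → dfsStep H fuel i st = dfsStep G fuel i st := by
  intro fuel
  induction fuel with
  | zero => intro i st _ _; rw [dfsStep_zero, dfsStep_zero]
  | succ f ih =>
      intro i st hi hnv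
      have hvst : v ∉ st.1 := fun h => hnv (mono_call G (f+1) i st h)
      have hip : i ≠ p := by
        rintro rfl
        apply hnv
        rw [dfsStep_succ]
        exact mem_fold G f i (nbrs G i) st v ((mem_nbrs G i v).mpr hadjpv)
      have hiv : i ≠ v := fun h => hvst (h ▸ hi)
      rw [dfsStep_succ] at hnv
      rw [dfsStep_succ, dfsStep_succ, nbrs_eq hH hip hiv]
      have key : ∀ (l : List (Fin (n+1))) (st : St n),
          v ∉ (l.foldl (stp G f i) st).1 →
          l.foldl (stp H f i) st = l.foldl (stp G f i) st := by
        intro l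
        induction l with
        | nil => intro st _; rw [List.foldl_nil, List.foldl_nil]
        | cons j l ihl =>
            intro st hnv
            simp only [List.foldl_cons] at hnv ⊢
            by_cases hj : j ∈ st.1
            · rw [stp_mem G hj] at hnv
              rw [stp_mem H hj, stp_mem G hj]
              exact ihl st hnv
            · rw [stp_not G hj] at hnv
              rw [stp_not H hj, stp_not G hj]
              set st' : St n := (insert j st.1, Function.update st.2 j i) with hst'def
              have hvsub : v ∉ (dfsStep G f j st').1 :=
                fun h => hnv (mono_fold G f i l _ h)
              rw [ih j st' (Finset.mem_insert_self _ _) hvsub]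
              exact ihl _ hnv
      exact key _ st hnv

theorem pfold (hH : H = G.deleteEdges {s(p,v)}) (hadjpv : G.Adj p v) {r : Fin (n+1)} (fuel : ℕ) :
    ∀ (L : List (Fin (n+1))) (st : St n), Good r st → p ∈ st.1 → v ∉ st.1 → v ∉ L →
      ((v ∈ (L.foldl (stp G fuel p) st).1 → (L.foldl (stp G fuel p) st).2 v ≠ p) ∧
       (v ∉ (L.foldl (stp G fuel p) st).1 →
         (L.foldl (stp H fuel p) st = L.foldl (stp G fuel p) st ∧
          Good r (L.foldl (stp G fuel p) st) ∧ st.1 ⊆ (L.foldl (stp G fuel p) st).1))) := by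
  intro L
  induction L with
  | nil =>
      intro st hG hp hv _
      simp only [List.foldl_nil]
      exact ⟨fun h => absurd h hv, fun _ => ⟨by trivial, hG, Finset.Subset.refl _⟩⟩
  | cons j L ihl =>
      intro st hGood hp hv hvL
      have hvj : v ≠ j := fun h => hvL (by rw [h]; exact List.mem_cons_self)
      have hvL' : v ∉ L := fun h => hvL (List.mem_cons_of_mem _ h)
      simp only [List.foldl_cons]
      by_cases hj : j ∈ st.1
      · rw [stp_mem H hj, stp_mem G hj]
        exact ihl st hGood hp hv hvL'
      · rw [stp_not H hj, stp_not G hj]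
        set st' : St n := (insert j st.1, Function.update st.2 j p) with hst'def
        set subG := dfsStep G fuel j st' with hsubdef
        have hGood' : Good r st' := good_insert hGood hp hj
        have hvst' : v ∉ st'.1 := by
          intro h
          rcases Finset.mem_insert.mp h with h | h
          · exact hvj h
          · exact hv h
        by_cases hvsub : v ∈ subG.1
        · constructor
          · intro _
            have hfr : (L.foldl (stp G fuel p) subG).2 v = subG.2 v :=
              frozen_fold' G fuel p L subG v (Or.inl hvsub)
            rw [hfr]
            rcases scope_call G fuel j st' v (Finset.mem_insert_self _ _) hvsub hvst' with h | ⟨_, h2⟩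
            · rw [h]; intro hc; apply hj; rw [hc]; exact hp
            · intro hc; apply h2; rw [hc]; exact Finset.mem_insert_of_mem hp
          · intro hna
            exact absurd (mono_fold G fuel p L subG hvsub) hna
        · have hpre : dfsStep H fuel j st' = subG :=
            pre_call hH hadjpv fuel j st' (Finset.mem_insert_self _ _) hvsub
          rw [hpre]
          have hGsub : Good r subG := good_call G fuel j st' (Finset.mem_insert_self _ _) hGood'
          have hpsub : p ∈ subG.1 :=
            mono_call G fuel j st' (Finset.mem_insert_of_mem hp)
          have hres := ihl subG hGsub hpsub hvsub hvL'
          refine ⟨hres.1, fun hna => ?_⟩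
          obtain ⟨h1, h2, h3⟩ := hres.2 hna
          exact ⟨h1, h2, Finset.Subset.trans (Finset.subset_insert _ _)
            (Finset.Subset.trans (mono_call G fuel j st') h3)⟩

end Del

section Main
variable {G H : SimpleGraph (Fin (n+1))} {p v : Fin (n+1)}

theorem main_call (hH : H = G.deleteEdges {s(p,v)}) (hadjpv : G.Adj p v) {r : Fin (n+1)} :
    ∀ (fuel : ℕ) (i : Fin (n+1)) (st : St n), Good r st → i ∈ st.1 → v ∉ st.1 →
      v ∈ (dfsStep G fuel i st).1 → (dfsStep G fuel i st).2 v = p →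
      (p ∈ (dfsStep H fuel i st).1 ∧
       (∀ k, (dfsStep H fuel i st).2^[k] p ≠ v) ∧
       (∀ i', (dfsStep H fuel i st).2 i' = p → v < i' → i' ≠ r →
          ∀ k, 0 < k → (dfsStep H fuel i st).2^[k] v ≠ i')) := by
  intro fuel
  induction fuel with
  | zero =>
      intro i st _ _ hvst hv _
      rw [dfsStep_zero] at hv
      exact absurd hv hvst
  | succ f ih =>
      intro i st hGood hi hvst hv hpar
      by_cases hip : i = p
      · rw [hip] at hi hv hpar ⊢
        clear hip
        obtain ⟨L1, L2, hsG, hsH, hL1, hL2⟩ := nbrs_split hH hadjpv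
        have hvL1 : v ∉ L1 := fun h => (lt_irrefl v) (hL1 v h)
        have hpf := pfold hH hadjpv f L1 st hGood hi hvst hvL1
        set a := L1.foldl (stp G f p) st with ha
        have hva : v ∉ a.1 := by
          intro hva
          apply hpf.1 hva
          have he : (dfsStep G (f+1) p st).2 v = a.2 v := by
            rw [dfsStep_succ, hsG, List.foldl_append]
            exact frozen_fold' G f p (v::L2) a v (Or.inl hva)
          rw [← he]; exact hpar
        obtain ⟨hba, hGa, hsta⟩ := hpf.2 hva
        have hpa : p ∈ a.1 := hsta hi
        set res := L2.foldl (stp H f p) a with hresd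
        have hgoal : dfsStep H (f+1) p st = res := by
          rw [dfsStep_succ, hsH, List.foldl_append, hba]
        rw [hgoal]
        have hGres : Good r res := good_fold' H f p L2 a hpa hGa
        have hfra : ∀ u ∈ a.1, res.2 u = a.2 u :=
          fun u hu => frozen_fold' H f p L2 a u (Or.inl hu)
        have ga3 := hGa.2.2.1
        have hchaina : ∀ k, res.2^[k] p = a.2^[k] p := chain_congr hfra ga3 hpa
        refine ⟨mono_fold H f p L2 a hpa, ?_, ?_⟩
        · intro k
          rw [hchaina k]
          intro h
          apply hva
          rw [← h]
          exact chain_mem ga3 hpa k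
        · intro i' hi'p hvi' hir k hk hchain
          by_cases hi'res : i' ∈ res.1
          · by_cases hi'a : i' ∈ a.1
            · have hi'fr : a.2 i' = p := by rw [← hfra i' hi'a]; exact hi'p
              by_cases hvres : v ∈ res.1
              · rcases chain_reach H f p L2 a hpa hvres hva k with ⟨_, h2'⟩ | ⟨t, ht⟩
                · rw [hchain] at h2'; exact h2' hi'a
                · rw [hchain, hchaina t] at ht
                  cases t with
                  | zero =>
                      have hpi' : p = i' := ht
                      have hpr : p = r := hGa.2.2.2.2.1 p hpa (by rw [← hpi'] at hi'fr; exact hi'fr)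
                      exact hir (by rw [← hpi', hpr])
                  | succ t =>
                      have hcyc : a.2^[t+2] p = p := by
                        rw [Function.iterate_succ_apply', ht, hi'fr]
                      obtain ⟨k0, hk0⟩ := hGa.2.2.2.2.2 p hpa
                      have hpr : p = r :=
                        cycle_eq_root hGa.2.1 (by omega : (0:ℕ) < t+2) hcyc hk0
                      apply hir
                      rw [← ht, hpr]
                      exact Function.iterate_fixed hGa.2.1 _
              · have hrv : res.2 v = r := hGres.2.2.2.1 v hvres
                have hiter : res.2^[k] v = r := by
                  cases k with
                  | zero => exact absurd hk (lt_irrefl 0)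
                  | succ k =>
                      rw [Function.iterate_succ_apply, hrv]
                      exact Function.iterate_fixed hGres.2.1 k
                rw [hchain] at hiter; exact hir hiter
            · rcases scope_fold' H f p L2 a i' hpa hi'res hi'a with ⟨_, h2'⟩ | ⟨_, h3'⟩
              · exact absurd hvi' (not_lt.mpr (le_of_lt (hL2 i' h2')))
              · apply h3'; rw [hi'p]; exact hpa
          · have h4 : res.2 i' = r := hGres.2.2.2.1 i' hi'res
            have hpr : p = r := by rw [← hi'p, h4]
            by_cases hvres : v ∈ res.1
            · have hmem : res.2^[k] v ∈ res.1 := chain_mem hGres.2.2.1 hvres k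
              rw [hchain] at hmem; exact hi'res hmem
            · have hrv : res.2 v = r := hGres.2.2.2.1 v hvres
              have hiter : res.2^[k] v = r := by
                cases k with
                | zero => exact absurd hk (lt_irrefl 0)
                | succ k =>
                    rw [Function.iterate_succ_apply, hrv]
                    exact Function.iterate_fixed hGres.2.1 k
              rw [hchain] at hiter; exact hir hiter
      · -- i ≠ p
        have hiv : i ≠ v := fun h => hvst (h ▸ hi)
        rw [dfsStep_succ] at hv hpar
        rw [dfsStep_succ, nbrs_eq hH hip hiv]
        have key : ∀ (L : List (Fin (n+1))) (st : St n), Good r st → i ∈ st.1 → v ∉ st.1 →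
            v ∈ (L.foldl (stp G f i) st).1 → (L.foldl (stp G f i) st).2 v = p →
            (p ∈ (L.foldl (stp H f i) st).1 ∧
             (∀ k, (L.foldl (stp H f i) st).2^[k] p ≠ v) ∧
             (∀ i', (L.foldl (stp H f i) st).2 i' = p → v < i' → i' ≠ r →
                ∀ k, 0 < k → (L.foldl (stp H f i) st).2^[k] v ≠ i')) := by
          intro L
          induction L with
          | nil =>
              intro st _ _ hvst hv _
              simp only [List.foldl_nil] at hv
              exact absurd hv hvst
          | cons j L ihl =>
              intro st hGood hi hvst hv hpar
              simp only [List.foldl_cons] at hv hpar ⊢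
              by_cases hj : j ∈ st.1
              · rw [stp_mem G hj] at hv hpar
                rw [stp_mem H hj]
                exact ihl st hGood hi hvst hv hpar
              · rw [stp_not G hj] at hv hpar
                rw [stp_not H hj]
                set st' : St n := (insert j st.1, Function.update st.2 j i) with hst'def
                set subG := dfsStep G f j st' with hsubGd
                set subH := dfsStep H f j st' with hsubHd
                have hG' : Good r st' := good_insert hGood hi hj
                have hvj : v ≠ j := by
                  intro h
                  have hjsub : v ∈ subG.1 := by
                    rw [h]; exact mono_call G f j st' (Finset.mem_insert_self _ _)
                  have h1 : (L.foldl (stp G f i) subG).2 v = subG.2 v :=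
                    frozen_fold' G f i L subG v (Or.inl hjsub)
                  have h2 : subG.2 v = st'.2 v := by
                    apply frozen_call G f j st' v
                    left; rw [h]; exact Finset.mem_insert_self _ _
                  have h3 : st'.2 v = i := by rw [h]; exact Function.update_self _ _ _
                  rw [h1, h2, h3] at hpar
                  exact hip hpar
                have hvst' : v ∉ st'.1 := by
                  intro hmem
                  rcases Finset.mem_insert.mp hmem with hmem | hmem
                  · exact hvj hmem
                  · exact hvst hmem
                by_cases hvsub : v ∈ subG.1
                · have hparsub : subG.2 v = p := by
                    rw [← frozen_fold' G f i L subG v (Or.inl hvsub)]; exact hpar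
                  obtain ⟨c0s, c1s, c2s⟩ :=
                    ih j st' hG' (Finset.mem_insert_self _ _) hvst' hvsub hparsub
                  have hpnst : p ∉ st.1 := by
                    rcases scope_call G f j st' v (Finset.mem_insert_self _ _) hvsub hvst'
                      with h | ⟨_, h2⟩
                    · rw [hparsub] at h; intro hc; apply hj; rw [← h]; exact hc
                    · rw [hparsub] at h2
                      intro hc; exact h2 (Finset.mem_insert_of_mem hc)
                  have hGsubH : Good r subH := good_call H f j st' (Finset.mem_insert_self _ _) hG'
                  set res := L.foldl (stp H f i) subH with hresd
                  have histsubH : i ∈ subH.1 := mono_call H f j st' (Finset.mem_insert_of_mem hi)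
                  have hGres : Good r res := good_fold' H f i L subH histsubH hGsubH
                  have gs3 := hGsubH.2.2.1
                  have hfrs : ∀ u ∈ subH.1, res.2 u = subH.2 u :=
                    fun u hu => frozen_fold' H f i L subH u (Or.inl hu)
                  have hfr_st : ∀ u ∈ st.1, res.2 u = st.2 u := by
                    intro u hu
                    have e1 : res.2 u = subH.2 u :=
                      hfrs u (mono_call H f j st' (Finset.mem_insert_of_mem hu))
                    have e2 : subH.2 u = st'.2 u :=
                      frozen_call H f j st' u (Or.inl (Finset.mem_insert_of_mem hu))
                    have e3 : st'.2 u = st.2 u :=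
                      Function.update_of_ne (fun h => hj (by rw [← h]; exact hu)) _ _
                    rw [e1, e2, e3]
                  refine ⟨mono_fold H f i L subH c0s, ?_, ?_⟩
                  · intro k
                    rw [chain_congr hfrs gs3 c0s k]
                    exact c1s k
                  · intro i' hi'p hvi' hir k hk hchain
                    by_cases hi'res : i' ∈ res.1
                    · by_cases hi'sub : i' ∈ subH.1
                      · have hi'fr : subH.2 i' = p := by rw [← hfrs i' hi'sub]; exact hi'p
                        by_cases hvsubH : v ∈ subH.1
                        · rw [chain_congr hfrs gs3 hvsubH k] at hchain
                          exact c2s i' hi'fr hvi' hir k hk hchain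
                        · by_cases hvres : v ∈ res.1
                          · rcases chain_reach H f i L subH histsubH hvres hvsubH k
                              with ⟨_, h2'⟩ | ⟨t, ht⟩
                            · rw [hchain] at h2'; exact h2' hi'sub
                            · rw [hchain] at ht
                              have hcc : res.2^[t] i = st.2^[t] i :=
                                chain_congr hfr_st hGood.2.2.1 hi t
                              have hmem : i' ∈ st.1 := by
                                rw [← ht, hcc]
                                exact chain_mem hGood.2.2.1 hi t
                              have hste : res.2 i' = st.2 i' := hfr_st i' hmem
                              rw [hste] at hi'p
                              apply hpnst
                              rw [← hi'p]
                              exact hGood.2.2.1 i' hmem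
                          · have hrv : res.2 v = r := hGres.2.2.2.1 v hvres
                            have hiter : res.2^[k] v = r := by
                              cases k with
                              | zero => exact absurd hk (lt_irrefl 0)
                              | succ k =>
                                  rw [Function.iterate_succ_apply, hrv]
                                  exact Function.iterate_fixed hGres.2.1 k
                            rw [hchain] at hiter; exact hir hiter
                      · rcases scope_fold' H f i L subH i' histsubH hi'res hi'sub
                          with ⟨h1', _⟩ | ⟨_, h3'⟩
                        · exact hip (by rw [← h1', hi'p])
                        · apply h3'; rw [hi'p]; exact c0s
                    · have h4 : res.2 i' = r := hGres.2.2.2.1 i' hi'res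
                      have hpr : p = r := by rw [← hi'p, h4]
                      apply hpnst
                      rw [hpr]
                      exact hGood.1
                · have hpre : subH = subG :=
                    pre_call hH hadjpv f j st' (Finset.mem_insert_self _ _) hvsub
                  rw [hpre]
                  exact ihl subG (good_call G f j st' (Finset.mem_insert_self _ _) hG')
                    (mono_call G f j st' (Finset.mem_insert_of_mem hi)) hvsub hv hpar
        exact key (nbrs G i) st hGood hi hvst hv hpar
end Main

end PFG

/-- If `H` is a connected graph obtained from `G` by deleting an edge of
`DFS(G)` (namely the tree edge `{parent v, v}` for a non-root vertex `v`),
then the κ-inversions of `DFS(H)` as a spanning tree of `G` coincide with its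
κ-inversions as a spanning tree of `H`; in particular `κ(G,DFS(H)) = κ(H,DFS(H))`. -/
theorem kappa_dfs_delete_edge_invariant {n : ℕ}
    (G : SimpleGraph (Fin (n+1))) (hG : G.Connected) (r : Fin (n+1))
    (v : Fin (n+1)) (hv : v ≠ r)
    (H : SimpleGraph (Fin (n+1)))
    (hH : H = G.deleteEdges {s(PFG.dfsParent G r v, v)})
    (hHconn : H.Connected) :
    (∀ i j : Fin (n+1),
        PFG.IsKappaInversion H r (PFG.dfsParent H r) i j ↔
        PFG.IsKappaInversion G r (PFG.dfsParent H r) i j) ∧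
      PFG.kappaNum G r (PFG.dfsParent H r) = PFG.kappaNum H r (PFG.dfsParent H r) := by
  classical
  by_cases hA : G.Adj (PFG.dfsParent G r v) v
  · have hGood0 : PFG.Good r (({r}, fun _ => r) : PFG.St n) := by
      refine ⟨Finset.mem_singleton_self r, rfl, ?_, ?_, ?_, ?_⟩
      · intro u _; exact Finset.mem_singleton_self r
      · intro u _; rfl
      · intro u hu _; exact Finset.mem_singleton.mp hu
      · intro u _; exact ⟨1, rfl⟩
    have hr0 : r ∈ (({r}, fun _ => r) : PFG.St n).1 := Finset.mem_singleton_self r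
    have hv0 : v ∉ (({r}, fun _ => r) : PFG.St n).1 := by
      intro h
      exact hv (Finset.mem_singleton.mp h)
    have hvG : v ∈ (PFG.dfsStep G (n+1) r ({r}, fun _ => r)).1 := PFG.visits_all G hG r v
    have hparG : (PFG.dfsStep G (n+1) r ({r}, fun _ => r)).2 v = PFG.dfsParent G r v := rfl
    obtain ⟨hpres, c1, c2⟩ :=
      PFG.main_call hH hA (n+1) r (({r}, fun _ => r) : PFG.St n) hGood0 hr0 hv0 hvG hparG
    set par := PFG.dfsParent H r with hpardef
    have hpar_eq : par = (PFG.dfsStep H (n+1) r ({r}, fun _ => r)).2 := by rw [hpardef]; rfl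
    have hiff : ∀ i j : Fin (n+1),
        PFG.IsKappaInversion H r par i j ↔
        PFG.IsKappaInversion G r par i j := by
      intro i j
      constructor
      · rintro ⟨hanc, hlt, hir, hadj⟩
        refine ⟨hanc, hlt, hir, ?_⟩
        rw [hH, SimpleGraph.deleteEdges_adj] at hadj
        exact hadj.1
      · rintro ⟨hanc, hlt, hir, hadj⟩
        refine ⟨hanc, hlt, hir, ?_⟩
        rw [hH, SimpleGraph.deleteEdges_adj]
        refine ⟨hadj, ?_⟩
        intro hmem
        rw [Set.mem_singleton_iff, Sym2.eq_iff] at hmem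
        obtain ⟨k, hk, hkeq⟩ := hanc
        rcases hmem with ⟨h1, h2⟩ | ⟨h1, h2⟩
        · subst h2
          rw [hpar_eq] at h1 hkeq
          exact c2 i h1 hlt hir k hk hkeq
        · subst h2
          rw [hpar_eq] at h1 hkeq
          apply c1 (k+1)
          rw [Function.iterate_succ_apply', hkeq, h1]
    refine ⟨hiff, ?_⟩
    unfold PFG.kappaNum
    congr 1
    ext q
    exact (hiff q.1 q.2).symm
  · have hHG : H = G := by
      rw [hH]
      ext a b
      rw [SimpleGraph.deleteEdges_adj]
      constructor
      · exact fun h => h.1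
      · intro h
        refine ⟨h, ?_⟩
        intro hmem
        rw [Set.mem_singleton_iff, Sym2.eq_iff] at hmem
        rcases hmem with ⟨h1, h2⟩ | ⟨h1, h2⟩
        · apply hA; rw [← h1, ← h2]; exact h
        · apply hA; rw [← h2, ← h1]; exact h.symm
    rw [hHG]
    exact ⟨fun i j => Iff.rfl, rfl⟩
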